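/- arXiv:1110.1171 — 2 statements merged into one kernel-verified Lean document; each statement's English description precedes it below -/
import Mathlib

section
/- Let A and B be finitely generated commutative algebras over an algebraically closed field k. If A and B are both integral domains, then A ⊗_k B is an integral domain. -/
open TensorProduct

/-- In a finitely generated domain over an algebraically closed field, an element killed by
every `k`-algebra homomorphism to `k` is zero. -/
lemma eq_zero_of_forall_algHom_eq_zero (k A : Type*) [Field k] [IsAlgClosed k]
    [CommRing A] [Algebra k A] [Algebra.FiniteType k A] [IsDomain A]
    (a : A) (h : ∀ φ : A →ₐ[k] k, φ a = 0) : a = 0 := by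
  have hJ : IsJacobsonRing A := isJacobsonRing_of_finiteType (A := k)
  have hbot : (⊥ : Ideal A).jacobson = ⊥ :=
    hJ.out Ideal.isRadical_bot_of_noZeroDivisors
  have : a ∈ (⊥ : Ideal A).jacobson := by
    rw [Ideal.jacobson, Ideal.mem_sInf]
    rintro m ⟨-, hm⟩
    haveI := hm
    letI : Field (A ⧸ m) := Ideal.Quotient.field m
    -- the residue field A ⧸ m is isomorphic to k
    have : Algebra.FiniteType k (A ⧸ m) :=
      Algebra.FiniteType.of_surjective (Ideal.Quotient.mkₐ k m)
        Ideal.Quotient.mk_surjective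
    have hfin : Module.Finite k (A ⧸ m) := finite_of_finite_type_of_isJacobsonRing k (A ⧸ m)
    have hint : Algebra.IsIntegral k (A ⧸ m) := Algebra.IsIntegral.of_finite k (A ⧸ m)
    have hsurj : Function.Surjective (algebraMap k (A ⧸ m)) :=
      IsAlgClosed.algebraMap_bijective_of_isIntegral.2
    have hbij : Function.Bijective (Algebra.ofId k (A ⧸ m)) :=
      ⟨(algebraMap k (A ⧸ m)).injective, hsurj⟩
    let e : k ≃ₐ[k] (A ⧸ m) := AlgEquiv.ofBijective (Algebra.ofId k (A ⧸ m)) hbij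
    let φ : A →ₐ[k] k := e.symm.toAlgHom.comp (Ideal.Quotient.mkₐ k m)
    have hφ : φ a = 0 := h φ
    have : Ideal.Quotient.mk m a = 0 := by
      have := congrArg e hφ
      simpa [φ, map_zero] using this
    exact (Ideal.Quotient.eq_zero_iff_mem).mp this
  rw [hbot] at this
  simpa using this

/-- If `A` and `B` are finitely generated algebras over an algebraically closed field `k`
and both are integral domains, then `A ⊗[k] B` is an integral domain. -/
theorem stmt_2 (k A B : Type*) [Field k] [IsAlgClosed k]
    [CommRing A] [CommRing B] [Algebra k A] [Algebra k B]
    [Algebra.FiniteType k A] [Algebra.FiniteType k B]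
    [IsDomain A] [IsDomain B] :
    IsDomain (A ⊗[k] B) := by
  classical
  let b : Module.Basis (Module.Basis.ofVectorSpaceIndex k B) k B := Module.Basis.ofVectorSpace k B
  let b' : Module.Basis _ A (A ⊗[k] B) := Algebra.TensorProduct.basis A b
  -- evaluation maps
  let f : (A →ₐ[k] k) → (A ⊗[k] B →ₐ[k] B) := fun φ =>
    (Algebra.TensorProduct.lid k B).toAlgHom.comp
      (Algebra.TensorProduct.map φ (AlgHom.id k B))
  have key : ∀ (φ : A →ₐ[k] k) (x : A ⊗[k] B) (i : Module.Basis.ofVectorSpaceIndex k B),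
      b.repr (f φ x) i = φ (b'.repr x i) := by
    intro φ x i
    induction x using TensorProduct.induction_on with
    | zero => simp
    | tmul a m =>
        simp only [f, b', AlgHom.coe_comp, AlgEquiv.toAlgHom_eq_coe, AlgHom.coe_coe,
          Function.comp_apply, Algebra.TensorProduct.map_tmul, AlgHom.coe_id, id_eq,
          Algebra.TensorProduct.lid_tmul, Algebra.TensorProduct.basis_repr_tmul,
          Finsupp.smul_apply, Finsupp.mapRange_apply, map_smul, map_mul,
          smul_eq_mul, AlgHom.commutes, Algebra.algebraMap_self, RingHom.id_apply]
        simp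
    | add x y hx hy => simp [map_add, hx, hy]
  have nontriv : Nontrivial (A ⊗[k] B) := by
    obtain ⟨i, hi⟩ : ∃ i, b.repr 1 i ≠ 0 := by
      by_contra hcon
      push_neg at hcon
      have : b.repr (1 : B) = 0 := Finsupp.ext fun i => hcon i
      have : (1 : B) = 0 := by
        have := congrArg b.repr.symm this
        simpa using this
      exact one_ne_zero this
    refine ⟨0, 1, fun hcon => ?_⟩
    have h1 : b'.repr (1 : A ⊗[k] B) i = algebraMap k A (b.repr 1 i) := by
      have : (1 : A ⊗[k] B) = (1 : A) ⊗ₜ[k] (1 : B) := rfl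
      rw [this, Algebra.TensorProduct.basis_repr_tmul]
      simp [Finsupp.mapRange_apply]
    have : algebraMap k A (b.repr 1 i) = 0 := by
      rw [← h1, ← hcon]; simp
    exact hi ((map_eq_zero_iff _ (algebraMap k A).injective).mp this)
  have : NoZeroDivisors (A ⊗[k] B) := by
    constructor
    intro x y hxy
    by_contra hcon
    push_neg at hcon
    obtain ⟨hx, hy⟩ := hcon
    obtain ⟨i, hi⟩ : ∃ i, b'.repr x i ≠ 0 := by
      by_contra h; push_neg at h
      exact hx (by simpa using congrArg b'.repr.symm (Finsupp.ext h : b'.repr x = 0))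
    obtain ⟨j, hj⟩ : ∃ j, b'.repr y j ≠ 0 := by
      by_contra h; push_neg at h
      exact hy (by simpa using congrArg b'.repr.symm (Finsupp.ext h : b'.repr y = 0))
    have hprod : b'.repr x i * b'.repr y j = 0 := by
      apply eq_zero_of_forall_algHom_eq_zero k A
      intro φ
      have h0 : f φ x * f φ y = 0 := by
        rw [← map_mul, hxy, map_zero]
      rcases mul_eq_zero.mp h0 with h | h
      · have : φ (b'.repr x i) = 0 := by rw [← key φ x i, h]; simp
        rw [map_mul, this, zero_mul]
      · have : φ (b'.repr y j) = 0 := by rw [← key φ y j, h]; simp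
        rw [map_mul, this, mul_zero]
    rcases mul_eq_zero.mp hprod with h | h
    · exact hi h
    · exact hj h
  exact NoZeroDivisors.to_isDomain _
end

section
/- In the polynomial ring k[T_{ij} : 1 ≤ i < j ≤ n] over a field k, the ideal generated by all Plücker relations P_{ijkl} := T_{ij}T_{kl} − T_{ik}T_{jl} + T_{il}T_{jk} for 1 ≤ i < j < k < l ≤ n is a prime ideal. -/
open MvPolynomial

/-- Index set for the Plücker variables `T_{ij}`, `i < j`. -/
abbrev PIdx (n : ℕ) := {p : Fin n × Fin n // p.1 < p.2}

/-- The variable `T_{ij}`. -/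
noncomputable def Tv {K : Type*} [CommRing K] {n : ℕ} (i j : Fin n) (h : i < j) :
    MvPolynomial (PIdx n) K := X ⟨(i, j), h⟩

/-- The Plücker relation `P_{ijkl} = T_{ij}T_{kl} - T_{ik}T_{jl} + T_{il}T_{jk}`. -/
noncomputable def pluck {K : Type*} [CommRing K] {n : ℕ} (i j k l : Fin n)
    (hij : i < j) (hjk : j < k) (hkl : k < l) : MvPolynomial (PIdx n) K :=
  Tv i j hij * Tv k l hkl - Tv i k (hij.trans hjk) * Tv j l (hjk.trans hkl)
    + Tv i l (hij.trans (hjk.trans hkl)) * Tv j k hjk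

/-- The set of all Plücker relations. -/
def pluckerSet (K : Type*) [CommRing K] (n : ℕ) : Set (MvPolynomial (PIdx n) K) :=
  {P | ∃ (i j k l : Fin n) (hij : i < j) (hjk : j < k) (hkl : k < l),
    P = pluck i j k l hij hjk hkl}

namespace PluckerPrime

variable {K : Type*} [Field K] {n : ℕ}

/-- The 2×2 minor `x_i y_j - x_j y_i`. -/
noncomputable def mino (K : Type*) [Field K] {n : ℕ} (i j : Fin n) :
    MvPolynomial (Fin n × Fin 2) K :=
  X (i, 0) * X (j, 1) - X (j, 0) * X (i, 1)

/-- The classifying map `T_{ij} ↦ x_i y_j - x_j y_i`. -/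
noncomputable def phi (K : Type*) [Field K] (n : ℕ) :
    MvPolynomial (PIdx n) K →ₐ[K] MvPolynomial (Fin n × Fin 2) K :=
  aeval (fun p => mino K p.1.1 p.1.2)

lemma phi_X (p : PIdx n) : phi K n (X p) = mino K p.1.1 p.1.2 := aeval_X _ _

lemma phi_pluck (i j k l : Fin n) (hij : i < j) (hjk : j < k) (hkl : k < l) :
    phi K n (pluck i j k l hij hjk hkl) = 0 := by
  simp only [pluck, Tv, map_add, map_sub, map_mul, phi_X, mino]
  ring

lemma span_le_ker :
    Ideal.span (pluckerSet K n) ≤ RingHom.ker (phi K n).toRingHom := by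
  rw [Ideal.span_le]
  rintro f ⟨i, j, k, l, hij, hjk, hkl, rfl⟩
  simpa [RingHom.mem_ker] using phi_pluck i j k l hij hjk hkl

/-- Componentwise comparability of index pairs. -/
def cmp2 (p q : PIdx n) : Prop := p.1.1 ≤ q.1.1 ∧ p.1.2 ≤ q.1.2

/-- A monomial exponent is *standard* if its support is a chain. -/
def Std (d : PIdx n →₀ ℕ) : Prop :=
  ∀ p ∈ d.support, ∀ q ∈ d.support, cmp2 p q ∨ cmp2 q p

lemma Std_mono {e d : PIdx n →₀ ℕ} (h : e ≤ d) (hd : Std d) : Std e := by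
  intro p hp q hq
  have hsub : e.support ⊆ d.support := by
    intro x hx
    simp only [Finsupp.mem_support_iff] at hx ⊢
    intro h0
    exact hx (Nat.le_zero.mp (h0 ▸ h x))
  exact hd p (hsub hp) q (hsub hq)

/-- The image monomial `∏ x_{a_t} y_{b_t}` of a standard monomial. -/
noncomputable def mu (d : PIdx n →₀ ℕ) : (Fin n × Fin 2) →₀ ℕ :=
  d.sum fun p k => k • (Finsupp.single (p.1.1, 0) 1 + Finsupp.single (p.1.2, 1) 1)

lemma mu_zero : mu (0 : PIdx n →₀ ℕ) = 0 := Finsupp.sum_zero_index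

lemma mu_add (d e : PIdx n →₀ ℕ) : mu (d + e) = mu d + mu e :=
  Finsupp.sum_add_index' (fun _ => zero_smul _ _) (fun _ b₁ b₂ => add_smul b₁ b₂ _)

lemma mu_single (p : PIdx n) :
    mu (Finsupp.single p 1) =
      Finsupp.single (p.1.1, 0) 1 + Finsupp.single (p.1.2, 1) 1 := by
  have h : mu (Finsupp.single p 1) =
      (1 : ℕ) • (Finsupp.single (p.1.1, (0:Fin 2)) 1 + Finsupp.single (p.1.2, 1) 1) :=
    Finsupp.sum_single_index (zero_smul _ _)
  simpa using h

/-- The x-weight of a monomial in the target ring. -/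
def w (ν : (Fin n × Fin 2) →₀ ℕ) : ℕ :=
  ν.sum fun v k => if v.2 = 0 then k * v.1.val else 0

lemma w_add (ν ν' : (Fin n × Fin 2) →₀ ℕ) : w (ν + ν') = w ν + w ν' :=
  Finsupp.sum_add_index' (fun a => by simp)
    (fun a b₁ b₂ => by by_cases h : a.2 = 0 <;> simp [h, add_mul])

lemma w_single (v : Fin n × Fin 2) (k : ℕ) :
    w (Finsupp.single v k) = if v.2 = 0 then k * v.1.val else 0 :=
  Finsupp.sum_single_index (by simp)

lemma w_sub {ν u : (Fin n × Fin 2) →₀ ℕ} (h : u ≤ ν) : w (ν - u) + w u = w ν := by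
  rw [← w_add, tsub_add_cancel_of_le h]

lemma w_mu_single (p : PIdx n) : w (mu (Finsupp.single p 1)) = p.1.1.val := by
  rw [mu_single, w_add, w_single, w_single]
  norm_num

end PluckerPrime
namespace PluckerPrime

variable {K : Type*} [Field K] {n : ℕ}

def deg (d : PIdx n →₀ ℕ) : ℕ := d.sum fun _ k => k

lemma deg_add (d e : PIdx n →₀ ℕ) : deg (d + e) = deg d + deg e :=
  Finsupp.sum_add_index' (fun _ => rfl) (fun _ _ _ => rfl)

lemma deg_single (p : PIdx n) : deg (Finsupp.single p 1) = 1 :=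
  Finsupp.sum_single_index rfl

lemma deg_eq_zero {d : PIdx n →₀ ℕ} (h : deg d = 0) : d = 0 := by
  ext p
  by_contra hp
  have hp' : p ∈ d.support := Finsupp.mem_support_iff.mpr (by simpa using hp)
  have : d p ≤ deg d := by
    have h2 : d p ≤ ∑ q ∈ d.support, d q :=
      Finset.single_le_sum (f := fun q => d q) (fun _ _ => Nat.zero_le _) hp'
    exact h2
  simp only [h, Nat.le_zero] at this
  exact hp (by simpa using this)

lemma exists_decomp {d : PIdx n →₀ ℕ} (h : d ≠ 0) :
    ∃ (p : PIdx n) (e : PIdx n →₀ ℕ), p ∈ d.support ∧ d = e + Finsupp.single p 1 ∧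
      deg e + 1 = deg d ∧ e ≤ d := by
  obtain ⟨p, hp⟩ := Finsupp.support_nonempty_iff.mpr h
  have h1 : Finsupp.single p 1 ≤ d := by
    rw [Finsupp.le_iff]
    intro i hi
    have hip : i = p := by
      by_contra hipne
      have := Finsupp.support_single_subset hi
      simp at this
      exact hipne this
    subst hip
    simpa [Finsupp.single_apply] using Nat.one_le_iff_ne_zero.mpr (Finsupp.mem_support_iff.mp hp)
  refine ⟨p, d - Finsupp.single p 1, hp, (tsub_add_cancel_of_le h1).symm, ?_, tsub_le_self⟩
  have := deg_add (d - Finsupp.single p 1) (Finsupp.single p 1)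
  rw [tsub_add_cancel_of_le h1, deg_single] at this
  omega

lemma X_mul_X (s t : Fin n × Fin 2) :
    (X s * X t : MvPolynomial (Fin n × Fin 2) K)
      = monomial (Finsupp.single s 1 + Finsupp.single t 1) 1 := by
  rw [show (X s : MvPolynomial (Fin n × Fin 2) K) = monomial (Finsupp.single s 1) 1 from rfl,
    show (X t : MvPolynomial (Fin n × Fin 2) K) = monomial (Finsupp.single t 1) 1 from rfl,
    monomial_mul, one_mul]

lemma key_zero :
    coeff (mu (0 : PIdx n →₀ ℕ)) (phi K n (monomial 0 1)) = 1 ∧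
    ∀ ν ∈ (phi K n (monomial (0 : PIdx n →₀ ℕ) (1:K))).support,
      w (mu (0 : PIdx n →₀ ℕ)) ≤ w ν ∧ (w ν = w (mu (0 : PIdx n →₀ ℕ)) → ν = mu (0 : PIdx n →₀ ℕ)) := by
  rw [show (monomial (0 : PIdx n →₀ ℕ) (1:K)) = 1 from rfl, map_one, mu_zero]
  constructor
  · simp
  · intro ν hν
    classical
    have hν0 : ν = 0 := by
      have h1 : (1 : MvPolynomial (Fin n × Fin 2) K) = monomial 0 1 := rfl
      rw [h1, support_monomial] at hν
      simp [one_ne_zero] at hν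
      exact hν
    simp [hν0]

lemma key (N : ℕ) : ∀ d : PIdx n →₀ ℕ, deg d ≤ N →
    coeff (mu d) (phi K n (monomial d 1)) = 1 ∧
    ∀ ν ∈ (phi K n (monomial d 1)).support,
      w (mu d) ≤ w ν ∧ (w ν = w (mu d) → ν = mu d) := by
  induction N with
  | zero =>
    intro d hd
    have hd0 : d = 0 := deg_eq_zero (Nat.le_zero.mp hd)
    subst hd0
    exact key_zero
  | succ N ih =>
    intro d hd
    by_cases hd0 : d = 0
    · subst hd0
      exact key_zero
    obtain ⟨p, e, hpmem, hde, hdeg, hle⟩ := exists_decomp hd0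
    have hdegE : deg e ≤ N := by omega
    obtain ⟨c1, c2⟩ := ih e hdegE
    set a := p.1.1 with ha
    set b := p.1.2 with hb
    have hab : a.val < b.val := p.2
    set F := phi K n (monomial e (1:K)) with hF
    set u : (Fin n × Fin 2) →₀ ℕ := Finsupp.single (a,0) 1 + Finsupp.single (b,1) 1 with hu
    set v : (Fin n × Fin 2) →₀ ℕ := Finsupp.single (b,0) 1 + Finsupp.single (a,1) 1 with hv
    have hmud : mu d = mu e + u := by rw [hde, mu_add, mu_single]
    have hwu : w u = a.val := by rw [hu, w_add, w_single, w_single]; norm_num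
    have hwv : w v = b.val := by rw [hv, w_add, w_single, w_single]; norm_num
    have hwmud : w (mu d) = w (mu e) + a.val := by rw [hmud, w_add, hwu]
    have hmino : mino K a b = monomial u 1 - monomial v 1 := by
      rw [mino, X_mul_X, X_mul_X]
    have hsplit : phi K n (monomial d (1:K)) = F * monomial u 1 - F * monomial v 1 := by
      have hmm : monomial d (1:K) = monomial e 1 * monomial (Finsupp.single p 1) 1 := by
        rw [monomial_mul, one_mul, ← hde]
      rw [hmm, map_mul,
        show phi K n (monomial (Finsupp.single p 1) (1:K)) = mino K a b from phi_X p,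
        hmino, mul_sub]
    constructor
    · rw [hsplit, coeff_sub]
      have h1 : u ≤ mu d := hmud ▸ le_add_self
      have h2 : mu d - u = mu e := by rw [hmud, add_tsub_cancel_right]
      rw [coeff_mul_monomial', if_pos h1, h2, c1, one_mul]
      have hzero : coeff (mu d) (F * monomial v 1) = 0 := by
        rw [coeff_mul_monomial']
        by_cases hvle : v ≤ mu d
        · rw [if_pos hvle]
          have hcz : coeff (mu d - v) F = 0 := by
            by_contra hc
            have hmem : mu d - v ∈ F.support := mem_support_iff.mpr hc
            have hge := (c2 _ hmem).1
            have hws := w_sub hvle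
            omega
          rw [hcz, zero_mul]
        · rw [if_neg hvle]
      rw [hzero, sub_zero]
    · intro ν hν
      rw [hsplit] at hν
      have hsub := support_sub (Fin n × Fin 2) (F * monomial u 1) (F * monomial v 1) hν
      rcases Finset.mem_union.mp hsub with hν1 | hν2
      · have hc : coeff ν (F * monomial u 1) ≠ 0 := mem_support_iff.mp hν1
        rw [coeff_mul_monomial'] at hc
        by_cases hule : u ≤ ν
        · rw [if_pos hule, mul_one] at hc
          have hmem : ν - u ∈ F.support := mem_support_iff.mpr hc
          obtain ⟨hge, heq⟩ := c2 _ hmem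
          have hws := w_sub hule
          constructor
          · omega
          · intro hEq
            have hnue : ν - u = mu e := heq (by omega)
            have hν' : ν = mu e + u := by
              rw [← hnue]; exact (tsub_add_cancel_of_le hule).symm
            rw [hν', ← hmud]
        · rw [if_neg hule] at hc
          exact absurd rfl hc
      · have hc : coeff ν (F * monomial v 1) ≠ 0 := mem_support_iff.mp hν2
        rw [coeff_mul_monomial'] at hc
        by_cases hvle : v ≤ ν
        · rw [if_pos hvle, mul_one] at hc
          have hmem : ν - v ∈ F.support := mem_support_iff.mpr hc
          obtain ⟨hge, heq⟩ := c2 _ hmem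
          have hws := w_sub hvle
          constructor
          · omega
          · intro hEq
            omega
        · rw [if_neg hvle] at hc
          exact absurd rfl hc

end PluckerPrime

namespace PluckerPrime

variable {K : Type*} [Field K] {n : ℕ}

lemma single_le_of_mem {d : PIdx n →₀ ℕ} {p : PIdx n} (hp : p ∈ d.support) :
    Finsupp.single p 1 ≤ d := by
  rw [Finsupp.le_iff]
  intro i hi
  have hip : i = p := by
    by_contra hipne
    have := Finsupp.support_single_subset hi
    simp at this
    exact hipne this
  subst hip
  simpa [Finsupp.single_apply] using Nat.one_le_iff_ne_zero.mpr (Finsupp.mem_support_iff.mp hp)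

lemma decomp_at {d : PIdx n →₀ ℕ} {p : PIdx n} (hp : p ∈ d.support) :
    d = (d - Finsupp.single p 1) + Finsupp.single p 1 ∧
      deg (d - Finsupp.single p 1) + 1 = deg d := by
  have h1 := single_le_of_mem hp
  refine ⟨(tsub_add_cancel_of_le h1).symm, ?_⟩
  have := deg_add (d - Finsupp.single p 1) (Finsupp.single p 1)
  rw [tsub_add_cancel_of_le h1, deg_single] at this
  omega

lemma mu_apply_x (d : PIdx n →₀ ℕ) (i : Fin n) :
    mu d (i, 0) = d.sum fun p k => if p.1.1 = i then k else 0 := by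
  classical
  rw [mu, Finsupp.sum_apply]
  refine Finsupp.sum_congr (fun p hp => ?_)
  rw [Finsupp.smul_apply, Finsupp.add_apply, Finsupp.single_apply, Finsupp.single_apply]
  rw [if_neg (by simp : ¬ ((p.1.2, (1:Fin 2)) = (i, 0)))]
  by_cases h : p.1.1 = i
  · simp [h]
  · rw [if_neg (by simp [Prod.ext_iff, h]), if_neg h]
    simp

lemma mu_apply_y (d : PIdx n →₀ ℕ) (j : Fin n) :
    mu d (j, 1) = d.sum fun p k => if p.1.2 = j then k else 0 := by
  classical
  rw [mu, Finsupp.sum_apply]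
  refine Finsupp.sum_congr (fun p hp => ?_)
  rw [Finsupp.smul_apply, Finsupp.add_apply, Finsupp.single_apply, Finsupp.single_apply]
  rw [if_neg (by simp : ¬ ((p.1.1, (0:Fin 2)) = (j, 1)))]
  by_cases h : p.1.2 = j
  · simp [h]
  · rw [if_neg (by simp [Prod.ext_iff, h]), if_neg h]
    simp

lemma mu_apply_x_pos {d : PIdx n →₀ ℕ} {p : PIdx n} (hp : p ∈ d.support) :
    mu d (p.1.1, 0) ≠ 0 := by
  classical
  rw [mu_apply_x]
  have h1 : (if p.1.1 = p.1.1 then d p else 0) ≤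
      ∑ q ∈ d.support, (if q.1.1 = p.1.1 then d q else 0) :=
    Finset.single_le_sum (f := fun q => if q.1.1 = p.1.1 then d q else 0)
      (fun _ _ => by positivity) hp
  simp only [if_pos rfl] at h1
  have hdp : d p ≠ 0 := Finsupp.mem_support_iff.mp hp
  intro hcon
  rw [Finsupp.sum] at hcon
  exact hdp (Nat.le_zero.mp (hcon ▸ h1))

lemma mu_apply_y_pos {d : PIdx n →₀ ℕ} {p : PIdx n} (hp : p ∈ d.support) :
    mu d (p.1.2, 1) ≠ 0 := by
  classical
  rw [mu_apply_y]
  have h1 : (if p.1.2 = p.1.2 then d p else 0) ≤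
      ∑ q ∈ d.support, (if q.1.2 = p.1.2 then d q else 0) :=
    Finset.single_le_sum (f := fun q => if q.1.2 = p.1.2 then d q else 0)
      (fun _ _ => by positivity) hp
  simp only [if_pos rfl] at h1
  have hdp : d p ≠ 0 := Finsupp.mem_support_iff.mp hp
  intro hcon
  rw [Finsupp.sum] at hcon
  exact hdp (Nat.le_zero.mp (hcon ▸ h1))

lemma mu_apply_x_zero {d : PIdx n →₀ ℕ} {i : Fin n}
    (h : ∀ p ∈ d.support, ¬ p.1.1 = i) : mu d (i, 0) = 0 := by
  classical
  rw [mu_apply_x, Finsupp.sum]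
  exact Finset.sum_eq_zero (fun q hq => if_neg (h q hq))

lemma mu_apply_y_zero {d : PIdx n →₀ ℕ} {j : Fin n}
    (h : ∀ p ∈ d.support, ¬ p.1.2 = j) : mu d (j, 1) = 0 := by
  classical
  rw [mu_apply_y, Finsupp.sum]
  exact Finset.sum_eq_zero (fun q hq => if_neg (h q hq))

lemma exists_min {d : PIdx n →₀ ℕ} (hstd : Std d) (h0 : d ≠ 0) :
    ∃ m ∈ d.support, ∀ q ∈ d.support, cmp2 m q := by
  obtain ⟨m, hm, hmin⟩ := Finset.exists_min_image d.support
    (fun p => p.1.1.val * n + p.1.2.val) (Finsupp.support_nonempty_iff.mpr h0)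
  refine ⟨m, hm, fun q hq => ?_⟩
  rcases hstd m hm q hq with h | h
  · exact h
  · have hle := hmin q hq
    have hq2 : q.1.2.val < n := q.1.2.isLt
    have h1 : q.1.1.val ≤ m.1.1.val := h.1
    have h2 : q.1.2.val ≤ m.1.2.val := h.2
    have e1 : q.1.1.val = m.1.1.val := by
      by_contra hne
      have hlt : q.1.1.val + 1 ≤ m.1.1.val := by omega
      have h3 : (q.1.1.val + 1) * n ≤ m.1.1.val * n := Nat.mul_le_mul_right n hlt
      have h4 : (q.1.1.val + 1) * n = q.1.1.val * n + n := by ring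
      omega
    have h5 : m.1.1.val * n = q.1.1.val * n := by rw [e1]
    have e2 : q.1.2.val = m.1.2.val := by omega
    have hqm : q = m := Subtype.ext (Prod.ext (Fin.ext e1.symm).symm (Fin.ext e2.symm).symm)
    rw [hqm]
    exact ⟨le_refl _, le_refl _⟩

lemma mu_inj (N : ℕ) : ∀ d d' : PIdx n →₀ ℕ, deg d ≤ N → Std d → Std d' →
    mu d = mu d' → d = d' := by
  induction N with
  | zero =>
    intro d d' hd _ _ hmu
    have hd0 : d = 0 := deg_eq_zero (Nat.le_zero.mp hd)
    subst hd0
    by_contra hne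
    obtain ⟨p, hp⟩ := Finsupp.support_nonempty_iff.mpr (fun h => hne h.symm)
    have := mu_apply_x_pos hp
    rw [← hmu, mu_zero] at this
    simp at this
  | succ N ih =>
    intro d d' hd hs hs' hmu
    by_cases h0 : d = 0
    · subst h0
      by_contra hne
      obtain ⟨p, hp⟩ := Finsupp.support_nonempty_iff.mpr (fun h => hne h.symm)
      have := mu_apply_x_pos hp
      rw [← hmu, mu_zero] at this
      simp at this
    by_cases h0' : d' = 0
    · subst h0'
      exfalso
      obtain ⟨p, hp⟩ := Finsupp.support_nonempty_iff.mpr h0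
      have := mu_apply_x_pos hp
      rw [hmu, mu_zero] at this
      simp at this
    obtain ⟨m, hm, hmin⟩ := exists_min hs h0
    obtain ⟨m', hm', hmin'⟩ := exists_min hs' h0'
    have hmm' : m = m' := by
      have e1 : m.1.1 = m'.1.1 := by
        rcases lt_trichotomy m.1.1 m'.1.1 with h | h | h
        · exfalso
          have hz : mu d' (m.1.1, 0) = 0 :=
            mu_apply_x_zero (fun q hq heq => absurd ((heq ▸ (hmin' q hq).1)) (not_le.mpr h))
          exact mu_apply_x_pos hm (hmu ▸ hz)
        · exact h
        · exfalso
          have hz : mu d (m'.1.1, 0) = 0 :=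
            mu_apply_x_zero (fun q hq heq => absurd ((heq ▸ (hmin q hq).1)) (not_le.mpr h))
          exact mu_apply_x_pos hm' (hmu ▸ hz)
      have e2 : m.1.2 = m'.1.2 := by
        rcases lt_trichotomy m.1.2 m'.1.2 with h | h | h
        · exfalso
          have hz : mu d' (m.1.2, 1) = 0 :=
            mu_apply_y_zero (fun q hq heq => absurd ((heq ▸ (hmin' q hq).2)) (not_le.mpr h))
          exact mu_apply_y_pos hm (hmu ▸ hz)
        · exact h
        · exfalso
          have hz : mu d (m'.1.2, 1) = 0 :=
            mu_apply_y_zero (fun q hq heq => absurd ((heq ▸ (hmin q hq).2)) (not_le.mpr h))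
          exact mu_apply_y_pos hm' (hmu ▸ hz)
      exact Subtype.ext (Prod.ext e1 e2)
    obtain ⟨hde, hdeg⟩ := decomp_at hm
    obtain ⟨hde', hdeg'⟩ := decomp_at hm'
    set e := d - Finsupp.single m 1 with he
    set e' := d' - Finsupp.single m' 1 with he'
    have hmue : mu e = mu e' := by
      have h1 : mu e + mu (Finsupp.single m 1) = mu e' + mu (Finsupp.single m' 1) := by
        rw [← mu_add, ← mu_add, ← hde, ← hde', hmu]
      rw [hmm'] at h1
      exact add_right_cancel h1
    have hstde : Std e := Std_mono tsub_le_self hs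
    have hstde' : Std e' := Std_mono tsub_le_self hs'
    have hdegN : deg e ≤ N := by omega
    have hee' : e = e' := ih e e' hdegN hstde hstde' hmue
    rw [hde, hde', hee', hmm']

end PluckerPrime

namespace PluckerPrime

variable {K : Type*} [Field K] {n : ℕ}

lemma std_ker_eq_zero {g : MvPolynomial (PIdx n) K}
    (hg : ∀ d ∈ g.support, Std d) (h : phi K n g = 0) : g = 0 := by
  by_contra hne
  obtain ⟨d0, hd0, hminw⟩ := Finset.exists_min_image g.support (fun d => w (mu d))
    (support_nonempty.mpr hne)
  have hsum : phi K n g = ∑ d ∈ g.support, coeff d g • phi K n (monomial d 1) := by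
    conv_lhs => rw [as_sum g]
    rw [map_sum]
    refine Finset.sum_congr rfl (fun d hd => ?_)
    have hmc : monomial d (coeff d g) = coeff d g • monomial d (1:K) := by
      rw [smul_monomial, smul_eq_mul, mul_one]
    rw [hmc, map_smul]
  have hco : coeff (mu d0) (phi K n g) = coeff d0 g := by
    rw [hsum, coeff_sum]
    rw [Finset.sum_eq_single d0]
    · rw [coeff_smul, (key (deg d0) d0 le_rfl).1, smul_eq_mul, mul_one]
    · intro b hb hbne
      rw [coeff_smul]
      have hz : coeff (mu d0) (phi K n (monomial b 1)) = 0 := by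
        by_contra hc
        have hmem : mu d0 ∈ (phi K n (monomial b (1:K))).support := mem_support_iff.mpr hc
        obtain ⟨hge, heq⟩ := (key (deg b) b le_rfl).2 _ hmem
        have hle := hminw b hb
        have hmu0b : mu d0 = mu b := heq (le_antisymm hle hge)
        exact hbne (mu_inj (deg b) b d0 le_rfl (hg b hb) (hg d0 hd0) hmu0b.symm)
      rw [hz, smul_zero]
    · intro hcon
      exact absurd hd0 hcon
  rw [h, coeff_zero] at hco
  exact (mem_support_iff.mp hd0) hco.symm

/-- Submodule of polynomials supported on standard monomials. -/
noncomputable def stdSub (K : Type*) [Field K] (n : ℕ) :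
    Submodule K (MvPolynomial (PIdx n) K) where
  carrier := {g | ∀ d ∈ g.support, Std d}
  add_mem' := by
    intro a b ha hb d hd
    rcases Finset.mem_union.mp (support_add hd) with h | h
    exacts [ha d h, hb d h]
  zero_mem' := by simp
  smul_mem' := fun c g hg d hd => hg d (support_smul hd)

noncomputable def Tgt (K : Type*) [Field K] (n : ℕ) : Submodule K (MvPolynomial (PIdx n) K) :=
  stdSub K n ⊔ (Ideal.span (pluckerSet K n)).restrictScalars K

/-- The straightening weight. -/
def Wt (d : PIdx n →₀ ℕ) : ℕ := d.sum fun p k => k * (p.1.2.val - p.1.1.val)^2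

lemma Wt_add (d e : PIdx n →₀ ℕ) : Wt (d + e) = Wt d + Wt e :=
  Finsupp.sum_add_index' (fun _ => zero_mul _) (fun _ b₁ b₂ => add_mul b₁ b₂ _)

lemma Wt_single (p : PIdx n) : Wt (Finsupp.single p 1) = (p.1.2.val - p.1.1.val)^2 := by
  have h : Wt (Finsupp.single p 1) = 1 * (p.1.2.val - p.1.1.val)^2 :=
    Finsupp.sum_single_index (zero_mul _)
  rw [h, one_mul]

lemma sq_lt_1 (A C E B : ℕ) (h1 : A < C) (h2 : C < E) (h3 : E < B) :
    (E - A)^2 + (B - C)^2 < (B - A)^2 + (E - C)^2 := by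
  obtain ⟨x, rfl⟩ : ∃ x, C = A + x + 1 := ⟨C - A - 1, by omega⟩
  obtain ⟨y, rfl⟩ : ∃ y, E = A + x + 1 + y + 1 := ⟨E - A - x - 2, by omega⟩
  obtain ⟨z, rfl⟩ : ∃ z, B = A + x + 1 + y + 1 + z + 1 := ⟨B - A - x - y - 3, by omega⟩
  have e1 : A + x + 1 + y + 1 - A = x + y + 2 := by omega
  have e2 : A + x + 1 + y + 1 + z + 1 - (A + x + 1) = y + z + 2 := by omega
  have e3 : A + x + 1 + y + 1 + z + 1 - A = x + y + z + 3 := by omega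
  have e4 : A + x + 1 + y + 1 - (A + x + 1) = y + 1 := by omega
  rw [e1, e2, e3, e4]
  nlinarith [sq_nonneg (x + z)]

lemma sq_lt_2 (A C E B : ℕ) (h1 : A < C) (h2 : C < E) (h3 : E < B) :
    (C - A)^2 + (B - E)^2 < (B - A)^2 + (E - C)^2 := by
  obtain ⟨x, rfl⟩ : ∃ x, C = A + x + 1 := ⟨C - A - 1, by omega⟩
  obtain ⟨y, rfl⟩ : ∃ y, E = A + x + 1 + y + 1 := ⟨E - A - x - 2, by omega⟩
  obtain ⟨z, rfl⟩ : ∃ z, B = A + x + 1 + y + 1 + z + 1 := ⟨B - A - x - y - 3, by omega⟩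
  have e1 : A + x + 1 - A = x + 1 := by omega
  have e2 : A + x + 1 + y + 1 + z + 1 - (A + x + 1 + y + 1) = z + 1 := by omega
  have e3 : A + x + 1 + y + 1 + z + 1 - A = x + y + z + 3 := by omega
  have e4 : A + x + 1 + y + 1 - (A + x + 1) = y + 1 := by omega
  rw [e1, e2, e3, e4]
  nlinarith [sq_nonneg (x + z)]

lemma straighten_step {d : PIdx n →₀ ℕ} {p q : PIdx n}
    (hp : p ∈ d.support) (hq : q ∈ d.support) (h1 : p.1.1 < q.1.1) (h2 : q.1.2 < p.1.2) :
    ∃ (f : MvPolynomial (PIdx n) K) (d1 d2 : PIdx n →₀ ℕ),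
      f ∈ Ideal.span (pluckerSet K n) ∧ Wt d1 < Wt d ∧ Wt d2 < Wt d ∧
      monomial d (1:K) = f + monomial d1 1 - monomial d2 1 := by
  classical
  set a := p.1.1 with hadef
  set b := p.1.2 with hbdef
  set c := q.1.1 with hcdef
  set ee := q.1.2 with heedef
  have hab : a < b := p.2
  have hce : c < ee := q.2
  have hac : a < c := h1
  have heb : ee < b := h2
  have hae : a < ee := hac.trans hce
  have hcb : c < b := hce.trans heb
  have hpq : p ≠ q := fun h => absurd (congrArg (fun r => r.1.1) h) (ne_of_lt h1)
  have hpe : p = (⟨(a, b), hab⟩ : PIdx n) := rfl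
  have hqe : q = (⟨(c, ee), hce⟩ : PIdx n) := rfl
  have hle : Finsupp.single p 1 + Finsupp.single q 1 ≤ d := by
    intro x
    rw [Finsupp.add_apply, Finsupp.single_apply, Finsupp.single_apply]
    by_cases hxp : p = x
    · subst hxp
      rw [if_pos rfl, if_neg (fun h => hpq h.symm)]
      simpa using Nat.one_le_iff_ne_zero.mpr (Finsupp.mem_support_iff.mp hp)
    · rw [if_neg hxp]
      by_cases hxq : q = x
      · subst hxq
        rw [if_pos rfl]
        simpa using Nat.one_le_iff_ne_zero.mpr (Finsupp.mem_support_iff.mp hq)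
      · rw [if_neg hxq]
        simp
  set e0 := d - (Finsupp.single p 1 + Finsupp.single q 1) with he0
  have hde : d = e0 + (Finsupp.single p 1 + Finsupp.single q 1) :=
    (tsub_add_cancel_of_le hle).symm
  set P : MvPolynomial (PIdx n) K := pluck a c ee b hac hce heb with hP
  have hPmem : P ∈ Ideal.span (pluckerSet K n) :=
    Ideal.subset_span ⟨a, c, ee, b, hac, hce, heb, rfl⟩
  have hXpq : (X p : MvPolynomial (PIdx n) K) * X q
      = P + Tv a ee hae * Tv c b hcb - Tv a c hac * Tv ee b heb := by
    rw [hpe, hqe, hP]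
    simp only [pluck, Tv]
    ring
  have hmonod : monomial d (1:K) = monomial e0 1 * (X p * X q) := by
    rw [show (X p : MvPolynomial (PIdx n) K) = monomial (Finsupp.single p 1) 1 from rfl,
      show (X q : MvPolynomial (PIdx n) K) = monomial (Finsupp.single q 1) 1 from rfl,
      monomial_mul, monomial_mul, one_mul, one_mul, ← hde]
  have hm1 : (Tv a ee hae : MvPolynomial (PIdx n) K) * Tv c b hcb
      = monomial (Finsupp.single (⟨(a, ee), hae⟩ : PIdx n) 1
          + Finsupp.single (⟨(c, b), hcb⟩ : PIdx n) 1) 1 := by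
    rw [Tv, Tv, show (X (⟨(a, ee), hae⟩ : PIdx n) : MvPolynomial (PIdx n) K)
      = monomial (Finsupp.single (⟨(a, ee), hae⟩ : PIdx n) 1) 1 from rfl,
      show (X (⟨(c, b), hcb⟩ : PIdx n) : MvPolynomial (PIdx n) K)
      = monomial (Finsupp.single (⟨(c, b), hcb⟩ : PIdx n) 1) 1 from rfl,
      monomial_mul, one_mul]
  have hm2 : (Tv a c hac : MvPolynomial (PIdx n) K) * Tv ee b heb
      = monomial (Finsupp.single (⟨(a, c), hac⟩ : PIdx n) 1
          + Finsupp.single (⟨(ee, b), heb⟩ : PIdx n) 1) 1 := by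
    rw [Tv, Tv, show (X (⟨(a, c), hac⟩ : PIdx n) : MvPolynomial (PIdx n) K)
      = monomial (Finsupp.single (⟨(a, c), hac⟩ : PIdx n) 1) 1 from rfl,
      show (X (⟨(ee, b), heb⟩ : PIdx n) : MvPolynomial (PIdx n) K)
      = monomial (Finsupp.single (⟨(ee, b), heb⟩ : PIdx n) 1) 1 from rfl,
      monomial_mul, one_mul]
  refine ⟨monomial e0 1 * P,
    e0 + (Finsupp.single (⟨(a, ee), hae⟩ : PIdx n) 1 + Finsupp.single (⟨(c, b), hcb⟩ : PIdx n) 1),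
    e0 + (Finsupp.single (⟨(a, c), hac⟩ : PIdx n) 1 + Finsupp.single (⟨(ee, b), heb⟩ : PIdx n) 1),
    Ideal.mul_mem_left _ _ hPmem, ?_, ?_, ?_⟩
  · have w1 : Wt (e0 + (Finsupp.single (⟨(a, ee), hae⟩ : PIdx n) 1
        + Finsupp.single (⟨(c, b), hcb⟩ : PIdx n) 1))
        = Wt e0 + ((ee.val - a.val)^2 + (b.val - c.val)^2) := by
      rw [Wt_add, Wt_add, Wt_single, Wt_single]
    have w0 : Wt d = Wt e0 + ((b.val - a.val)^2 + (ee.val - c.val)^2) := by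
      conv_lhs => rw [hde]
      rw [Wt_add, Wt_add, Wt_single, Wt_single]
    have hsq := sq_lt_1 a.val c.val ee.val b.val hac hce heb
    omega
  · have w2 : Wt (e0 + (Finsupp.single (⟨(a, c), hac⟩ : PIdx n) 1
        + Finsupp.single (⟨(ee, b), heb⟩ : PIdx n) 1))
        = Wt e0 + ((c.val - a.val)^2 + (b.val - ee.val)^2) := by
      rw [Wt_add, Wt_add, Wt_single, Wt_single]
    have w0 : Wt d = Wt e0 + ((b.val - a.val)^2 + (ee.val - c.val)^2) := by
      conv_lhs => rw [hde]
      rw [Wt_add, Wt_add, Wt_single, Wt_single]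
    have hsq := sq_lt_2 a.val c.val ee.val b.val hac hce heb
    omega
  · rw [hmonod, hXpq, mul_sub, mul_add, hm1, hm2, monomial_mul, monomial_mul]
    norm_num

end PluckerPrime

namespace PluckerPrime

variable {K : Type*} [Field K] {n : ℕ}

lemma monomial_mem_Tgt (N : ℕ) : ∀ d : PIdx n →₀ ℕ, Wt d ≤ N → monomial d (1:K) ∈ Tgt K n := by
  induction N using Nat.strong_induction_on with
  | _ N ih =>
    intro d hWt
    by_cases hstd : Std d
    · apply Submodule.mem_sup_left
      show ∀ d' ∈ (monomial d (1:K)).support, Std d'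
      intro d' hd'
      classical
      rw [support_monomial, if_neg (one_ne_zero)] at hd'
      rw [Finset.mem_singleton.mp hd']
      exact hstd
    · rw [Std] at hstd
      push_neg at hstd
      obtain ⟨p, hp, q, hq, hnpq, hnqp⟩ := hstd
      have main : ∀ (p q : PIdx n), p ∈ d.support → q ∈ d.support →
          p.1.1 < q.1.1 → q.1.2 < p.1.2 → monomial d (1:K) ∈ Tgt K n := by
        intro p q hp hq h1 h2
        obtain ⟨f, d1, d2, hf, hw1, hw2, heq⟩ := straighten_step (K := K) hp hq h1 h2
        have hd1 : monomial d1 (1:K) ∈ Tgt K n :=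
          ih (Wt d1) (lt_of_lt_of_le hw1 hWt) d1 le_rfl
        have hd2 : monomial d2 (1:K) ∈ Tgt K n :=
          ih (Wt d2) (lt_of_lt_of_le hw2 hWt) d2 le_rfl
        have hfT : f ∈ Tgt K n := Submodule.mem_sup_right hf
        rw [heq]
        exact sub_mem (add_mem hfT hd1) hd2
      rcases lt_trichotomy p.1.1 q.1.1 with h | h | h
      · have h2 : q.1.2 < p.1.2 := by
          by_contra hc
          exact hnpq ⟨h.le, not_lt.mp hc⟩
        exact main p q hp hq h h2
      · exfalso
        rcases le_total p.1.2 q.1.2 with hl | hl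
        · exact hnpq ⟨h.le, hl⟩
        · exact hnqp ⟨h.ge, hl⟩
      · have h2 : p.1.2 < q.1.2 := by
          by_contra hc
          exact hnqp ⟨h.le, not_lt.mp hc⟩
        exact main q p hq hp h h2

lemma mem_Tgt (f : MvPolynomial (PIdx n) K) : f ∈ Tgt K n := by
  rw [as_sum f]
  refine Submodule.sum_mem _ (fun d hd => ?_)
  have hmc : monomial d (coeff d f) = coeff d f • monomial d (1:K) := by
    rw [smul_monomial, smul_eq_mul, mul_one]
  rw [hmc]
  exact Submodule.smul_mem _ _ (monomial_mem_Tgt (Wt d) d le_rfl)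

lemma ker_le_span : RingHom.ker (phi K n).toRingHom ≤ Ideal.span (pluckerSet K n) := by
  intro f hf
  obtain ⟨g, hg, h, hh, hsum⟩ := Submodule.mem_sup.mp (mem_Tgt f)
  have hhI : h ∈ Ideal.span (pluckerSet K n) := hh
  have hker : phi K n h = 0 := by
    have := span_le_ker hhI
    rwa [RingHom.mem_ker] at this
  have hfz : phi K n f = 0 := RingHom.mem_ker.mp hf
  have hgz : phi K n g = 0 := by
    have hadd : phi K n g + phi K n h = 0 := by rw [← map_add, hsum, hfz]
    rwa [hker, add_zero] at hadd
  have hg0 : g = 0 := std_ker_eq_zero hg hgz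
  rw [← hsum, hg0, zero_add]
  exact hhI

lemma span_eq_ker :
    Ideal.span (pluckerSet K n) = RingHom.ker (phi K n).toRingHom :=
  le_antisymm span_le_ker ker_le_span

end PluckerPrime


/-- The ideal of Plücker relations in `k[T_{ij} : 1 ≤ i < j ≤ n]` is prime. -/
theorem stmt_3 (K : Type*) [Field K] (n : ℕ) (hn : 4 ≤ n) :
    (Ideal.span (pluckerSet K n)).IsPrime := by
  rw [PluckerPrime.span_eq_ker]
  exact RingHom.ker_isPrime _
end
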